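/- For every even n ≥ 4 there exists a balanced bipartite graph B on 2n vertices with minimum degree at least n/2 + 1 and a vertex subset S with |S| = n + 1 such that B[S] is a forest and min(|S ∩ V1|, |S ∩ V2|) = 2. -/

import Mathlib

set_option maxHeartbeats 1000000
open Finset SimpleGraph

def starP (n i j : ℕ) : Prop :=
  2 ≤ i ∨ j = 0 ∨ (i = 0 ∧ 1 ≤ j ∧ j ≤ n / 2) ∨ (i = 1 ∧ n / 2 ≤ j)

instance (n i j : ℕ) : Decidable (starP n i j) := by unfold starP; infer_instance

def myG (n : ℕ) : SimpleGraph (Fin (2 * n)) where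
  Adj u v := (u.val < n ∧ n ≤ v.val ∧ starP n u.val (v.val - n)) ∨
             (v.val < n ∧ n ≤ u.val ∧ starP n v.val (u.val - n))
  symm := ⟨fun u v h => Or.symm h⟩
  loopless := ⟨fun u h => by rcases h with ⟨h1, h2, _⟩ | ⟨h1, h2, _⟩ <;> omega⟩

instance myGdec (n : ℕ) : DecidableRel (myG n).Adj := fun u v => by
  unfold myG; infer_instance

lemma myG_adj {n : ℕ} (u v : Fin (2 * n)) :
    (myG n).Adj u v ↔ ((u.val < n ∧ n ≤ v.val ∧ starP n u.val (v.val - n)) ∨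
      (v.val < n ∧ n ≤ u.val ∧ starP n v.val (u.val - n))) := Iff.rfl

lemma no_cycle_from {V : Type*} {G : SimpleGraph V} {x y : V}
    (hxy : ¬ G.Adj x y)
    (hedge : ∀ u v, G.Adj u v → u = x ∨ u = y ∨ v = x ∨ v = y)
    (hcommon : ∀ b b', G.Adj x b → G.Adj y b → G.Adj x b' → G.Adj y b' → b = b') :
    ∀ (c : G.Walk x x), ¬ c.IsCycle := by
  intro c hc
  cases c with
  | nil => exact hc.ne_nil rfl
  | @cons _ b _ h1 q =>
  cases q with
  | nil => exact G.irrefl h1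
  | @cons _ c2 _ h2 q2 =>
  have hbx : b ≠ x := h1.ne'
  have hby : b ≠ y := fun h => hxy (h ▸ h1)
  have hc2 : c2 = x ∨ c2 = y := by
    rcases hedge b c2 h2 with h|h|h|h <;> tauto
  have hnd := hc.2
  rcases hc2 with rfl | rfl
  · -- c2 = x
    cases q2 with
    | nil =>
      have := hc.three_le_length
      simp [SimpleGraph.Walk.length_cons] at this
    | @cons _ d _ h3 q3 =>
      simp [SimpleGraph.Walk.support_cons] at hnd
  · -- y replaced by c2
    cases q2 with
    | nil =>
      have := hc.three_le_length
      simp [SimpleGraph.Walk.length_cons] at this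
    | @cons _ b2 _ h3 q3 =>
    have hb2y : b2 ≠ c2 := h3.ne'
    have hb2x : b2 ≠ x := fun h => hxy (h ▸ h3).symm
    cases q3 with
    | nil => exact hb2x rfl
    | @cons _ c4 _ h4 q4 =>
    have hc4 : c4 = x ∨ c4 = c2 := by
      rcases hedge b2 c4 h4 with h|h|h|h <;> tauto
    rcases hc4 with rfl | rfl
    · cases q4 with
      | nil =>
        simp [SimpleGraph.Walk.support_cons] at hnd
        have hbb2 : b ≠ b2 := by tauto
        exact hbb2 (hcommon b b2 h1 h2.symm h4.symm h3)
      | @cons _ e _ h5 q5 =>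
        simp [SimpleGraph.Walk.support_cons] at hnd
    · simp [SimpleGraph.Walk.support_cons] at hnd

lemma double_star_acyclic {V : Type*} {G : SimpleGraph V} {x y : V}
    (hxy : ¬ G.Adj x y)
    (hedge : ∀ u v, G.Adj u v → u = x ∨ u = y ∨ v = x ∨ v = y)
    (hcommon : ∀ b b', G.Adj x b → G.Adj y b → G.Adj x b' → G.Adj y b' → b = b') :
    G.IsAcyclic := by
  classical
  intro v c hc
  have hmem : x ∈ c.support ∨ y ∈ c.support := by
    cases c with
    | nil => exact absurd rfl hc.ne_nil
    | @cons _ b _ h q =>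
      rcases hedge v b h with rfl|rfl|rfl|rfl
      · exact Or.inl (SimpleGraph.Walk.start_mem_support _)
      · exact Or.inr (SimpleGraph.Walk.start_mem_support _)
      · exact Or.inl (by simp [SimpleGraph.Walk.support_cons, q.start_mem_support])
      · exact Or.inr (by simp [SimpleGraph.Walk.support_cons, q.start_mem_support])
  rcases hmem with hm | hm
  · exact no_cycle_from hxy hedge hcommon (c.rotate _ hm) (hc.rotate hm)
  · exact no_cycle_from (fun h => hxy h.symm)
      (fun u v h => by rcases hedge u v h with h|h|h|h <;> tauto)
      (fun b b' h1 h2 h3 h4 => hcommon b b' h2 h1 h4 h3)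
      (c.rotate _ hm) (hc.rotate hm)

theorem stmt9 (n : ℕ) (hn : 4 ≤ n) (heven : Even n) :
    ∃ (G : SimpleGraph (Fin (2 * n))) (_ : DecidableRel G.Adj)
      (V1 V2 : Finset (Fin (2 * n))),
      Disjoint V1 V2 ∧ V1 ∪ V2 = Finset.univ ∧ V1.card = n ∧ V2.card = n ∧
      (∀ u v, G.Adj u v → (u ∈ V1 ∧ v ∈ V2) ∨ (u ∈ V2 ∧ v ∈ V1)) ∧
      (∀ v, n + 2 ≤ 2 * G.degree v) ∧
      ∃ S : Finset (Fin (2 * n)), S.card = n + 1 ∧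
        (G.induce (S : Set (Fin (2 * n)))).IsAcyclic ∧
        min (S ∩ V1).card (S ∩ V2).card = 2 := by
  have hpar : n % 2 = 0 := Nat.even_iff.mp heven
  have key : ∀ (p : ℕ → Prop) (_ : DecidablePred p),
      (univ.filter (fun v : Fin (2*n) => p v.val)).card = ((Finset.range (2*n)).filter p).card := by
    intro p hp
    apply Finset.card_bij (fun (a : Fin (2*n)) _ => a.val)
    · intro a ha; simp at ha ⊢; exact ha
    · intro a _ b _ hab; exact Fin.ext hab
    · intro b hb; simp at hb; exact ⟨⟨b, hb.1⟩, by simp [hb.2], rfl⟩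
  have hV1 : (univ.filter (fun v : Fin (2*n) => v.val < n)).card = n := by
    rw [key (fun k => k < n) inferInstance]
    have : (Finset.range (2*n)).filter (fun k => k < n) = Finset.range n := by
      ext a; simp; omega
    rw [this, Finset.card_range]
  have hV2 : (univ.filter (fun v : Fin (2*n) => n ≤ v.val)).card = n := by
    rw [key (fun k => n ≤ k) inferInstance]
    have : (Finset.range (2*n)).filter (fun k => n ≤ k) = Finset.Ico n (2*n) := by
      ext a; simp; omega
    rw [this, Nat.card_Ico]; omega
  have hS : (univ.filter (fun v : Fin (2*n) => v.val = 0 ∨ v.val = 1 ∨ n + 1 ≤ v.val)).card = n + 1 := by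
    rw [key (fun k => k = 0 ∨ k = 1 ∨ n + 1 ≤ k) inferInstance]
    have : (Finset.range (2*n)).filter (fun k => k = 0 ∨ k = 1 ∨ n + 1 ≤ k)
        = insert 0 (insert 1 (Finset.Ico (n+1) (2*n))) := by
      ext a; simp; omega
    rw [this, Finset.card_insert_of_notMem (by simp <;> omega),
      Finset.card_insert_of_notMem (by simp <;> omega), Nat.card_Ico]
    omega
  have hSV1 : ((univ.filter (fun v : Fin (2*n) => v.val = 0 ∨ v.val = 1 ∨ n + 1 ≤ v.val))
      ∩ (univ.filter (fun v : Fin (2*n) => v.val < n))).card = 2 := by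
    have : (univ.filter (fun v : Fin (2*n) => v.val = 0 ∨ v.val = 1 ∨ n + 1 ≤ v.val))
        ∩ (univ.filter (fun v : Fin (2*n) => v.val < n))
        = univ.filter (fun v : Fin (2*n) => v.val = 0 ∨ v.val = 1) := by
      ext a; simp; omega
    rw [this, key (fun k => k = 0 ∨ k = 1) inferInstance]
    have : (Finset.range (2*n)).filter (fun k => k = 0 ∨ k = 1) = {0, 1} := by
      ext a; simp; omega
    rw [this]; simp
  have hSV2 : ((univ.filter (fun v : Fin (2*n) => v.val = 0 ∨ v.val = 1 ∨ n + 1 ≤ v.val))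
      ∩ (univ.filter (fun v : Fin (2*n) => n ≤ v.val))).card = n - 1 := by
    have : (univ.filter (fun v : Fin (2*n) => v.val = 0 ∨ v.val = 1 ∨ n + 1 ≤ v.val))
        ∩ (univ.filter (fun v : Fin (2*n) => n ≤ v.val))
        = univ.filter (fun v : Fin (2*n) => n + 1 ≤ v.val) := by
      ext a; simp; omega
    rw [this, key (fun k => n + 1 ≤ k) inferInstance]
    have : (Finset.range (2*n)).filter (fun k => n + 1 ≤ k) = Finset.Ico (n+1) (2*n) := by
      ext a; simp; omega
    rw [this, Nat.card_Ico]; omega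
  refine ⟨myG n, inferInstance,
    univ.filter (fun v : Fin (2*n) => v.val < n),
    univ.filter (fun v : Fin (2*n) => n ≤ v.val), ?_, ?_, hV1, hV2, ?_, ?_,
    univ.filter (fun v : Fin (2*n) => v.val = 0 ∨ v.val = 1 ∨ n + 1 ≤ v.val),
    hS, ?_, ?_⟩
  · rw [Finset.disjoint_left]
    intro a ha hb
    simp at ha hb
    omega
  · ext a; simp; omega
  · intro u v h
    rw [myG_adj] at h
    rcases h with ⟨h1, h2, _⟩ | ⟨h1, h2, _⟩
    · left; constructor <;> simp <;> omega
    · right; constructor <;> simp <;> omega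
  · -- degrees
    intro v
    have hle : ∀ (T : Finset ℕ) (f : ℕ → Fin (2*n)), Set.InjOn f T →
        (∀ t ∈ T, (myG n).Adj v (f t)) → T.card ≤ (myG n).degree v := by
      intro T f hinj hmem
      exact Finset.card_le_card_of_injOn f
        (fun t ht => (SimpleGraph.mem_neighborFinset _ _ _).2 (hmem t ht)) hinj
    set fB : ℕ → Fin (2*n) := fun j => ⟨min (n + j) (2*n - 1), by omega⟩ with hfB
    set fA : ℕ → Fin (2*n) := fun i => ⟨min i (2*n - 1), by omega⟩ with hfA
    rcases Nat.lt_or_ge v.val n with hv | hv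
    · rcases Nat.lt_or_ge v.val 2 with hv2 | hv2
      · rcases Nat.lt_or_ge v.val 1 with hv0 | hv1
        · have h := hle (Finset.range (n/2 + 1)) fB
            (by intro a ha b hb hab; simp only [hfB, Fin.mk.injEq, Finset.coe_range, Set.mem_Iio, Finset.coe_insert, Set.mem_insert_iff, Finset.coe_Icc, Set.mem_Icc, Finset.coe_Ico, Set.mem_Ico] at ha hb hab; omega)
            (by intro t ht; rw [Finset.mem_range] at ht
                rw [myG_adj]; left
                refine ⟨by omega, by simp only [hfB]; omega, ?_⟩
                simp only [hfB, starP]; omega)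
          rw [Finset.card_range] at h
          omega
        · have h := hle (insert 0 (Finset.Icc (n/2) (n-1))) fB
            (by intro a ha b hb hab; simp only [hfB, Fin.mk.injEq, Finset.coe_range, Set.mem_Iio, Finset.coe_insert, Set.mem_insert_iff, Finset.coe_Icc, Set.mem_Icc, Finset.coe_Ico, Set.mem_Ico] at ha hb hab; omega)
            (by intro t ht; simp only [Finset.mem_insert, Finset.mem_Icc] at ht
                rw [myG_adj]; left
                refine ⟨by omega, by simp only [hfB]; omega, ?_⟩
                simp only [hfB, starP]; omega)
          rw [Finset.card_insert_of_notMem (by simp; omega), Nat.card_Icc] at h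
          omega
      · have h := hle (Finset.range n) fB
          (by intro a ha b hb hab; simp only [hfB, Fin.mk.injEq, Finset.coe_range, Set.mem_Iio, Finset.coe_insert, Set.mem_insert_iff, Finset.coe_Icc, Set.mem_Icc, Finset.coe_Ico, Set.mem_Ico] at ha hb hab; omega)
          (by intro t ht; rw [Finset.mem_range] at ht
              rw [myG_adj]; left
              refine ⟨by omega, by simp only [hfB]; omega, ?_⟩
              simp only [hfB, starP]; omega)
        rw [Finset.card_range] at h
        omega
    · rcases Nat.eq_or_lt_of_le hv with heq | hgt
      · have h := hle (Finset.range n) fA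
          (by intro a ha b hb hab; simp only [hfA, Fin.mk.injEq, Finset.coe_range, Set.mem_Iio, Finset.coe_insert, Set.mem_insert_iff, Finset.coe_Icc, Set.mem_Icc, Finset.coe_Ico, Set.mem_Ico] at ha hb hab; omega)
          (by intro t ht; rw [Finset.mem_range] at ht
              rw [myG_adj]; right
              refine ⟨by simp only [hfA]; omega, by omega, ?_⟩
              simp only [hfA, starP]; omega)
        rw [Finset.card_range] at h
        omega
      · by_cases hj : v.val - n ≤ n / 2
        · have h := hle (insert 0 (Finset.Ico 2 n)) fA
            (by intro a ha b hb hab; simp only [hfA, Fin.mk.injEq, Finset.coe_range, Set.mem_Iio, Finset.coe_insert, Set.mem_insert_iff, Finset.coe_Icc, Set.mem_Icc, Finset.coe_Ico, Set.mem_Ico] at ha hb hab; omega)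
            (by intro t ht; simp only [Finset.mem_insert, Finset.mem_Ico] at ht
                rw [myG_adj]; right
                refine ⟨by simp only [hfA]; omega, by omega, ?_⟩
                simp only [hfA, starP]; omega)
          rw [Finset.card_insert_of_notMem (by simp), Nat.card_Ico] at h
          omega
        · have h := hle (insert 1 (Finset.Ico 2 n)) fA
            (by intro a ha b hb hab; simp only [hfA, Fin.mk.injEq, Finset.coe_range, Set.mem_Iio, Finset.coe_insert, Set.mem_insert_iff, Finset.coe_Icc, Set.mem_Icc, Finset.coe_Ico, Set.mem_Ico] at ha hb hab; omega)
            (by intro t ht; simp only [Finset.mem_insert, Finset.mem_Ico] at ht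
                rw [myG_adj]; right
                refine ⟨by simp only [hfA]; omega, by omega, ?_⟩
                simp only [hfA, starP]; omega)
          rw [Finset.card_insert_of_notMem (by simp), Nat.card_Ico] at h
          omega
  · -- acyclic
    set S : Finset (Fin (2*n)) := univ.filter (fun v : Fin (2*n) => v.val = 0 ∨ v.val = 1 ∨ n + 1 ≤ v.val) with hSdef
    have h0 : (0 : ℕ) < 2 * n := by omega
    have h1 : (1 : ℕ) < 2 * n := by omega
    have hx : (⟨0, h0⟩ : Fin (2*n)) ∈ (S : Set (Fin (2*n))) := by simp [hSdef]
    have hy : (⟨1, h1⟩ : Fin (2*n)) ∈ (S : Set (Fin (2*n))) := by simp [hSdef]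
    set x : (S : Set (Fin (2*n))) := ⟨⟨0, h0⟩, hx⟩ with hxdef
    set y : (S : Set (Fin (2*n))) := ⟨⟨1, h1⟩, hy⟩ with hydef
    apply double_star_acyclic (x := x) (y := y)
    · intro h
      have h' : (myG n).Adj ⟨0, h0⟩ ⟨1, h1⟩ := h
      rw [myG_adj] at h'
      simp only [starP] at h'
      omega
    · intro u v h
      have h' : (myG n).Adj ↑u ↑v := h
      have hu := u.2
      have hv := v.2
      simp only [hSdef, Finset.coe_filter, Set.mem_setOf_eq] at hu hv
      rw [myG_adj] at h'
      have : (↑↑u : ℕ) = 0 ∨ (↑↑u : ℕ) = 1 ∨ (↑↑v : ℕ) = 0 ∨ (↑↑v : ℕ) = 1 := by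
        rcases h' with ⟨ha, hb, _⟩ | ⟨ha, hb, _⟩ <;> omega
      rcases this with h0' | h0' | h0' | h0'
      · exact Or.inl (Subtype.ext (Fin.ext (by simpa using h0')))
      · exact Or.inr (Or.inl (Subtype.ext (Fin.ext (by simpa using h0'))))
      · exact Or.inr (Or.inr (Or.inl (Subtype.ext (Fin.ext (by simpa using h0')))))
      · exact Or.inr (Or.inr (Or.inr (Subtype.ext (Fin.ext (by simpa using h0')))))
    · intro b b' ha1 ha2 ha3 ha4
      have hb := b.2
      have hb' := b'.2
      simp only [hSdef, Finset.coe_filter, Set.mem_setOf_eq] at hb hb'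
      have h1' : (myG n).Adj ⟨0, h0⟩ ↑b := ha1
      have h2' : (myG n).Adj ⟨1, h1⟩ ↑b := ha2
      have h3' : (myG n).Adj ⟨0, h0⟩ ↑b' := ha3
      have h4' : (myG n).Adj ⟨1, h1⟩ ↑b' := ha4
      rw [myG_adj] at h1' h2' h3' h4'
      simp only [starP] at h1' h2' h3' h4'
      apply Subtype.ext
      apply Fin.ext
      omega
  · rw [hSV1, hSV2]
    omega
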